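/- Let n be divisible by r with n ≥ r²(r+1)/2, and write n = rk. Then there exist distinct positive integers l_1 < l_2 < ... < l_r with l_1 + ... + l_r = k, and for any such choice, the complete r²-partite graph with r parts of size l_i for each i contains no singular copy of K_{r+1}. -/
import Mathlib


open SimpleGraph Set Function

/-- The degree of a vertex. -/
noncomputable def ndeg {V : Type*} (G : SimpleGraph V) (v : V) : ℕ :=
  (G.neighborSet v).ncard

/-- `G` contains no singular copy of `K_{r+1}`. -/
def NoSingularClique {V : Type*} (G : SimpleGraph V) (r : ℕ) : Prop :=
  ∀ s : Finset V, s.card = r + 1 → (∀ u ∈ s, ∀ v ∈ s, u ≠ v → G.Adj u v) →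
    ¬((∀ u ∈ s, ∀ v ∈ s, ndeg G u = ndeg G v) ∨
      (∀ u ∈ s, ∀ v ∈ s, u ≠ v → ndeg G u ≠ ndeg G v))

/-- The complete `r²`-partite graph whose parts are indexed by `Fin r × Fin r`, the parts
with first index `i` having size `l i`. -/
def completeMultipartiteR (r : ℕ) (l : Fin r → ℕ) :
    SimpleGraph (Σ p : Fin r × Fin r, Fin (l p.1)) :=
  SimpleGraph.fromRel fun x y => x.1 ≠ y.1

lemma cmr_adj_iff {r : ℕ} {l : Fin r → ℕ} {x y : Σ p : Fin r × Fin r, Fin (l p.1)} :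
    (completeMultipartiteR r l).Adj x y ↔ x.1 ≠ y.1 := by
  constructor
  · rintro ⟨hne, h | h⟩
    · exact h
    · exact h.symm
  · intro h
    exact ⟨fun he => h (congrArg Sigma.fst he), Or.inl h⟩

lemma cmr_ndeg_eq {r : ℕ} (l : Fin r → ℕ) (v : Σ p : Fin r × Fin r, Fin (l p.1)) :
    ndeg (completeMultipartiteR r l) v
      = Nat.card (Σ p : Fin r × Fin r, Fin (l p.1)) - l v.1.1 := by
  have hset : (completeMultipartiteR r l).neighborSet v
      = (Set.range (Sigma.mk (β := fun p => Fin (l p.1)) v.1))ᶜ := by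
    ext w
    simp only [mem_neighborSet, cmr_adj_iff, Set.mem_compl_iff, Set.mem_range]
    constructor
    · rintro h ⟨j, rfl⟩; exact h rfl
    · intro h hw
      obtain ⟨p, j⟩ := w
      exact h ⟨hw ▸ j, by cases hw; rfl⟩
  have hcard : (Set.range (Sigma.mk (β := fun p => Fin (l p.1)) v.1)).ncard = l v.1.1 := by
    rw [← Nat.card_coe_set_eq, Nat.card_range_of_injective sigma_mk_injective,
      Nat.card_eq_fintype_card, Fintype.card_fin]
  have := Set.ncard_add_ncard_compl (Set.range (Sigma.mk (β := fun p => Fin (l p.1)) v.1))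
  rw [ndeg, hset]
  omega

/-- If `n = rk ≥ r²(r+1)/2`, there exist distinct positive integers `l_1 < ⋯ < l_r`
summing to `k`, and for any such choice the complete `r²`-partite graph with each size
`l_i` appearing `r` times has no singular copy of `K_{r+1}`. -/
theorem completeMultipartite_noSingularClique (r k n : ℕ) (hr : 1 ≤ r)
    (hn : n = r * k) (hbig : r ^ 2 * (r + 1) ≤ 2 * n) :
    (∃ l : Fin r → ℕ, StrictMono l ∧ (∀ i, 0 < l i) ∧ ∑ i, l i = k) ∧
    (∀ l : Fin r → ℕ, StrictMono l → (∀ i, 0 < l i) → ∑ i, l i = k →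
      NoSingularClique (completeMultipartiteR r l) r) := by
  have hrk : r * (r + 1) ≤ 2 * k := by
    have h : r * (r * (r + 1)) ≤ r * (2 * k) := by
      calc r * (r * (r + 1)) = r ^ 2 * (r + 1) := by ring
      _ ≤ 2 * n := hbig
      _ = r * (2 * k) := by rw [hn]; ring
    exact Nat.le_of_mul_le_mul_left h (by omega)
  constructor
  · -- construction
    set T : ℕ := ∑ i : Fin r, (i.val + 1) with hTdef
    have hT2 : 2 * T = r * (r + 1) := by
      have h1 : (∑ i ∈ Finset.range r, i) * 2 = r * (r - 1) := Finset.sum_range_id_mul_two r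
      have h2 : T = (∑ i ∈ Finset.range r, i) + r := by
        rw [hTdef, Fin.sum_univ_eq_sum_range (fun i => i + 1) r, Finset.sum_add_distrib,
          Finset.sum_const, Finset.card_range, smul_eq_mul, mul_one]
      have h3 : r - 1 + 1 = r := by omega
      nlinarith [h1, h2]
    have hTk : T ≤ k := by omega
    set last : Fin r := ⟨r - 1, by omega⟩ with hlast
    refine ⟨fun i => i.val + 1 + if i = last then k - T else 0, ?_, ?_, ?_⟩
    · intro i j hij
      have h1 : i.val < j.val := hij
      have h2 : j.val < r := j.isLt
      have h3 : i ≠ last := by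
        simp only [hlast, Fin.ne_iff_vne]
        omega
      simp only [h3, if_false]
      split_ifs with h4
      · have : j.val = r - 1 := by rw [h4]
        omega
      · omega
    · intro i; positivity
    · rw [Finset.sum_add_distrib, Finset.sum_ite_eq' Finset.univ last fun _ => k - T]
      simp only [Finset.mem_univ, if_true]
      rw [← hTdef]
      omega
  · -- no singular clique
    intro l hmono hpos hsum s hcard hclq
    set N := Nat.card (Σ p : Fin r × Fin r, Fin (l p.1)) with hN
    have hle : ∀ i : Fin r, l i ≤ N := by
      intro i
      rw [hN, Nat.card_eq_fintype_card, Fintype.card_sigma]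
      calc l i = Fintype.card (Fin (l ((i, i) : Fin r × Fin r).1)) := by simp
      _ ≤ _ := Finset.single_le_sum (f := fun p : Fin r × Fin r => Fintype.card (Fin (l p.1)))
          (fun _ _ => Nat.zero_le _) (Finset.mem_univ (i, i))
    have hdeq : ∀ u v : Σ p : Fin r × Fin r, Fin (l p.1),
        ndeg (completeMultipartiteR r l) u = ndeg (completeMultipartiteR r l) v ↔
          u.1.1 = v.1.1 := by
      intro u v
      rw [cmr_ndeg_eq, cmr_ndeg_eq, ← hN, tsub_right_inj (hle _) (hle _)]
      exact ⟨fun h => hmono.injective h, fun h => by rw [h]⟩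
    rintro (hall | hdist)
    · -- all degrees equal: all first indices equal, pigeonhole on second index
      have hfe : ∀ u ∈ s, ∀ v ∈ s, u.1.1 = v.1.1 := fun u hu v hv =>
        (hdeq u v).mp (hall u hu v hv)
      have hinj : Set.InjOn (fun v : Σ p : Fin r × Fin r, Fin (l p.1) => v.1.2) s := by
        intro u hu v hv heq
        by_contra hne
        have hadj := hclq u hu v hv hne
        rw [cmr_adj_iff] at hadj
        exact hadj (Prod.ext (hfe u hu v hv) heq)
      have := Finset.card_le_card_of_injOn (t := (Finset.univ : Finset (Fin r)))
        (fun v : Σ p : Fin r × Fin r, Fin (l p.1) => v.1.2)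
        (fun _ _ => Finset.mem_univ _) hinj
      rw [hcard, Finset.card_univ, Fintype.card_fin] at this
      omega
    · -- all degrees distinct: pigeonhole on first index
      have hlt : (Finset.univ : Finset (Fin r)).card < s.card := by
        rw [hcard, Finset.card_univ, Fintype.card_fin]; omega
      obtain ⟨u, hu, v, hv, hne, heq⟩ :=
        Finset.exists_ne_map_eq_of_card_lt_of_maps_to hlt
          (f := fun v : Σ p : Fin r × Fin r, Fin (l p.1) => v.1.1)
          (fun _ _ => Finset.mem_univ _)
      exact hdist u hu v hv hne ((hdeq u v).mpr heq)
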